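/- Let n ≥ 2 and a ∈ ℝ, and let X = (x^n + a·x^{2n-1})·d/dx on [0,∞) near 0. Then the time-one map exp(X) has Taylor expansion exp(X)(x) = x + x^n + (a + n/2)·x^{2n-1} + O(x^{2n}) at x = 0. -/

import Mathlib

open Set Asymptotics

private lemma mvt_bound {f f' : ℝ → ℝ} {a b C : ℝ} (hab : a ≤ b)
    (hf : ∀ t ∈ Icc a b, HasDerivAt f (f' t) t)
    (hC : ∀ t ∈ Icc a b, |f' t| ≤ C) : |f b - f a| ≤ C * (b - a) := by
  have h := Convex.norm_image_sub_le_of_norm_hasDerivWithin_le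
    (f := f) (f' := f') (s := Icc a b) (C := C)
    (fun t ht => (hf t ht).hasDerivWithinAt) (fun t ht => hC t ht)
    (convex_Icc a b) (left_mem_Icc.2 hab) (right_mem_Icc.2 hab)
  simpa [Real.norm_eq_abs, abs_of_nonneg (sub_nonneg.2 hab)] using h

private lemma pow_mvt (m : ℕ) {R y z : ℝ} (hy : y ∈ Icc 0 R) (hz : z ∈ Icc 0 R) :
    |y ^ m - z ^ m| ≤ m * R ^ (m - 1) * |y - z| := by
  have h := Convex.norm_image_sub_le_of_norm_hasDerivWithin_le
    (f := fun w : ℝ => w ^ m) (f' := fun w => m * w ^ (m - 1)) (s := Icc 0 R)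
    (C := m * R ^ (m - 1))
    (fun w _ => (hasDerivAt_pow m w).hasDerivWithinAt)
    (fun w hw => by
      rw [Real.norm_eq_abs, abs_mul, abs_pow, Nat.abs_cast, abs_of_nonneg hw.1]
      gcongr
      exacts [hw.1, hw.2])
    (convex_Icc 0 R) hz hy
  simpa [Real.norm_eq_abs] using h

set_option maxHeartbeats 2000000 in
theorem stmt19 (n : ℕ) (hn : 2 ≤ n) (a : ℝ) (x₀ : ℝ) (hx₀ : 0 < x₀)
    (ψ : ℝ → ℝ → ℝ)
    (hψ0 : ∀ x ∈ Set.Icc (0:ℝ) x₀, ψ 0 x = x)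
    (hode : ∀ x ∈ Set.Icc (0:ℝ) x₀, ∀ t ∈ Set.Icc (0:ℝ) 1,
        HasDerivAt (fun s => ψ s x) ((ψ t x) ^ n + a * (ψ t x) ^ (2 * n - 1)) t) :
    (fun x => ψ 1 x - (x + x ^ n + (a + n / 2) * x ^ (2 * n - 1)))
      =O[nhdsWithin 0 (Set.Ioi 0)] fun x => x ^ (2 * n) := by
  obtain ⟨m, rfl⟩ : ∃ m, n = m + 2 := ⟨n - 2, by omega⟩
  have he1 : 2 * (m + 2) - 1 = 2 * m + 3 := by omega
  have he2 : 2 * (m + 2) = 2 * m + 4 := by omega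
  rw [he1, he2] at *
  set ρ : ℝ → ℝ := fun y => y ^ (m + 2) + a * y ^ (2 * m + 3) with hρdef
  set C1 : ℝ := 2 ^ (m + 2) + |a| * 2 ^ (2 * m + 3) with hC1def
  have hC1pos : 0 < C1 := by positivity
  set C2 : ℝ := (m + 2 : ℝ) * 2 ^ (m + 1) * C1 + |a| * 2 ^ (2 * m + 3) with hC2def
  have hC2pos : 0 < C2 := by positivity
  set C3 : ℝ := (m + 2 : ℝ) * (m + 1 : ℝ) * 2 ^ m * C1 ^ 2 + (m + 2 : ℝ) * C2
      + |a| * (2 * m + 3 : ℝ) * 2 ^ (2 * m + 2) * C1 with hC3def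
  have hC3pos : 0 < C3 := by positivity
  set δ : ℝ := min x₀ (min 1 (1 / (2 * C1))) with hδdef
  have hδpos : 0 < δ := lt_min hx₀ (lt_min one_pos (by positivity))
  have hδx₀ : δ ≤ x₀ := min_le_left _ _
  have hδ1 : δ ≤ 1 := le_trans (min_le_right _ _) (min_le_left _ _)
  have hδC1 : C1 * δ ≤ 1 / 2 := by
    have h : δ ≤ 1 / (2 * C1) := le_trans (min_le_right _ _) (min_le_right _ _)
    calc C1 * δ ≤ C1 * (1 / (2 * C1)) := by gcongr
      _ = 1 / 2 := by field_simp
  clear_value ρ C1 C2 C3 δ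
  have main : ∀ x ∈ Ioc (0:ℝ) δ,
      |ψ 1 x - (x + x ^ (m + 2) + (a + (m + 2 : ℝ) / 2) * x ^ (2 * m + 3))|
        ≤ C3 * x ^ (2 * m + 4) := by
    rintro x ⟨hx0, hxδ⟩
    have hx1 : x ≤ 1 := hxδ.trans hδ1
    have hxx₀ : x ∈ Icc (0:ℝ) x₀ := ⟨hx0.le, hxδ.trans hδx₀⟩
    set u : ℝ → ℝ := fun t => ψ t x with hudef
    have hu0 : u 0 = x := hψ0 x hxx₀
    have hderiv : ∀ t ∈ Icc (0:ℝ) 1, HasDerivAt u (ρ (u t)) t := fun t ht => by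
      simp only [hρdef]
      exact hode x hxx₀ t ht
    -- C1 * x^(m+2) ≤ x/2
    have hB : C1 * x ^ (m + 2) ≤ x / 2 := by
      have h1 : x ^ (m + 1) ≤ δ := by
        calc x ^ (m + 1) ≤ δ ^ (m + 1) := pow_le_pow_left₀ hx0.le hxδ _
          _ ≤ δ ^ 1 := pow_le_pow_of_le_one hδpos.le hδ1 (by omega)
          _ = δ := pow_one δ
      calc C1 * x ^ (m + 2) = C1 * x ^ (m + 1) * x := by ring
        _ ≤ C1 * δ * x := by gcongr
        _ ≤ 1 / 2 * x := by gcongr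
        _ = x / 2 := by ring
    have hBpos : 0 < C1 * x ^ (m + 2) := mul_pos hC1pos (pow_pos hx0 _)
    have hρbound : ∀ y : ℝ, |y| ≤ 2 * x → |ρ y| ≤ C1 * x ^ (m + 2) := by
      intro y hy
      have h1 : |ρ y| ≤ |y| ^ (m + 2) + |a| * |y| ^ (2 * m + 3) := by
        rw [hρdef]
        calc |y ^ (m + 2) + a * y ^ (2 * m + 3)|
            ≤ |y ^ (m + 2)| + |a * y ^ (2 * m + 3)| := abs_add_le _ _
          _ = |y| ^ (m + 2) + |a| * |y| ^ (2 * m + 3) := by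
              rw [abs_pow, abs_mul, abs_pow]
      have hy0 : (0:ℝ) ≤ |y| := abs_nonneg y
      calc |ρ y| ≤ (2 * x) ^ (m + 2) + |a| * (2 * x) ^ (2 * m + 3) := by
            refine h1.trans ?_; gcongr
        _ = 2 ^ (m + 2) * x ^ (m + 2) + |a| * (2 ^ (2 * m + 3) * (x ^ (m + 1) * x ^ (m + 2))) := by
            rw [mul_pow, mul_pow]; ring
        _ ≤ 2 ^ (m + 2) * x ^ (m + 2) + |a| * (2 ^ (2 * m + 3) * (1 * x ^ (m + 2))) := by
            gcongr
            exact pow_le_one₀ hx0.le hx1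
        _ = C1 * x ^ (m + 2) := by rw [hC1def]; ring
    -- bootstrap
    have keyA : ∀ t ∈ Icc (0:ℝ) 1, |u t - x| ≤ C1 * x ^ (m + 2) * t := by
      have hucont : ContinuousOn u (Icc 0 1) :=
        fun t ht => (hderiv t ht).continuousAt.continuousWithinAt
      set A : Set ℝ := {t | |u t - x| ≤ C1 * x ^ (m + 2) * t} with hAdef
      have hsub : Icc (0:ℝ) 1 ⊆ A := by
        apply IsClosed.Icc_subset_of_forall_exists_gt
        · have heq : A ∩ Icc 0 1
              = Icc (0:ℝ) 1 ∩ (fun t => |u t - x| - C1 * x ^ (m + 2) * t) ⁻¹' Iic 0 := by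
            ext t
            simp only [hAdef, mem_inter_iff, mem_setOf_eq, mem_preimage, mem_Iic, sub_nonpos]
            tauto
          rw [heq]
          have hcont2 : ContinuousOn (fun t => |u t - x| - C1 * x ^ (m + 2) * t) (Icc 0 1) :=
            ((hucont.sub continuousOn_const).abs).sub
              ((continuous_const.mul continuous_id).continuousOn)
          exact hcont2.preimage_isClosed_of_isClosed isClosed_Icc isClosed_Iic
        · show (0:ℝ) ∈ A
          simp [hAdef, hu0]
        · rintro t ⟨htA, ht0, ht1⟩ y hy
          have htA' : |u t - x| ≤ C1 * x ^ (m + 2) * t := htA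
          have hut : |u t - x| ≤ x / 2 := by
            refine htA'.trans (le_trans ?_ hB)
            nlinarith [hBpos, ht0, ht1.le]
          have hcont : ContinuousAt u t := (hderiv t ⟨ht0, ht1.le⟩).continuousAt
          obtain ⟨η, hη, hball⟩ := Metric.continuousAt_iff.mp hcont (x / 2) (by positivity)
          set s₁ := min (t + η / 2) (min y 1) with hs₁def
          have hts₁ : t < s₁ := lt_min (by linarith) (lt_min hy ht1)
          have hs₁1 : s₁ ≤ 1 := le_trans (min_le_right _ _) (min_le_right _ _)
          have hs₁y : s₁ ≤ y := le_trans (min_le_right _ _) (min_le_left _ _)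
          have hbound : ∀ σ ∈ Icc t s₁, |ρ (u σ)| ≤ C1 * x ^ (m + 2) := by
            intro σ hσ
            have hσt : dist σ t < η := by
              rw [Real.dist_eq, abs_of_nonneg (by linarith [hσ.1])]
              have h2 : σ ≤ t + η / 2 := hσ.2.trans (min_le_left _ _)
              linarith
            have h1 : |u σ - u t| < x / 2 := by
              have := hball hσt
              rwa [Real.dist_eq] at this
            have h2 : |u σ - x| ≤ x := by
              calc |u σ - x| ≤ |u σ - u t| + |u t - x| := abs_sub_le _ _ _
                _ ≤ x := by linarith
            apply hρbound
            calc |u σ| = |(u σ - x) + x| := by ring_nf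
              _ ≤ |u σ - x| + |x| := abs_add_le _ _
              _ ≤ x + x := by rw [abs_of_nonneg hx0.le]; linarith
              _ = 2 * x := by ring
          have hmvt : |u s₁ - u t| ≤ C1 * x ^ (m + 2) * (s₁ - t) :=
            mvt_bound hts₁.le
              (fun σ hσ => hderiv σ ⟨le_trans ht0 hσ.1, hσ.2.trans hs₁1⟩) hbound
          refine ⟨s₁, ?_, hts₁, hs₁y⟩
          show |u s₁ - x| ≤ C1 * x ^ (m + 2) * s₁
          calc |u s₁ - x| ≤ |u s₁ - u t| + |u t - x| := abs_sub_le _ _ _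
            _ ≤ C1 * x ^ (m + 2) * (s₁ - t) + C1 * x ^ (m + 2) * t := add_le_add hmvt htA'
            _ = C1 * x ^ (m + 2) * s₁ := by ring
      exact fun t ht => hsub ht
    -- corollaries
    have hA1 : ∀ t ∈ Icc (0:ℝ) 1, |u t - x| ≤ C1 * x ^ (m + 2) := fun t ht =>
      (keyA t ht).trans (by nlinarith [hBpos, ht.1, ht.2])
    have hmem2x : ∀ t ∈ Icc (0:ℝ) 1, u t ∈ Icc (0:ℝ) (2 * x) := by
      intro t ht
      have h1 : |u t - x| ≤ x / 2 := (hA1 t ht).trans hB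
      rw [abs_le] at h1
      constructor <;> [linarith [h1.1]; linarith [h1.2]]
    have hx2x : x ∈ Icc (0:ℝ) (2 * x) := ⟨hx0.le, by linarith⟩
    -- step 2
    have keyB : ∀ t ∈ Icc (0:ℝ) 1, |u t - x - t * x ^ (m + 2)| ≤ C2 * x ^ (2 * m + 3) * t := by
      intro t ht
      have h := mvt_bound (f := fun s => u s - x - s * x ^ (m + 2))
        (f' := fun s => ρ (u s) - x ^ (m + 2)) ht.1
        (fun σ hσ => (((hderiv σ ⟨hσ.1, hσ.2.trans ht.2⟩).sub_const x).sub
          (hasDerivAt_mul_const _)))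
        (fun σ hσ => by
          have hσ1 : σ ∈ Icc (0:ℝ) 1 := ⟨hσ.1, hσ.2.trans ht.2⟩
          have e1 : |u σ ^ (m + 2) - x ^ (m + 2)|
              ≤ ((m + 2 : ℝ) * (2 * x) ^ (m + 1)) * (C1 * x ^ (m + 2)) := by
            have hp := pow_mvt (m + 2) (hmem2x σ hσ1) hx2x
            simp only [show m + 2 - 1 = m + 1 from by omega] at hp
            refine hp.trans ?_
            push_cast
            gcongr
            exact hA1 σ hσ1
          have e2 : |a * u σ ^ (2 * m + 3)| ≤ |a| * (2 * x) ^ (2 * m + 3) := by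
            rw [abs_mul, abs_pow]
            gcongr
            rw [abs_le]
            exact ⟨by linarith [(hmem2x σ hσ1).1], (hmem2x σ hσ1).2⟩
          calc |ρ (u σ) - x ^ (m + 2)|
              = |(u σ ^ (m + 2) - x ^ (m + 2)) + a * u σ ^ (2 * m + 3)| := by
                rw [hρdef]; congr 1; ring
            _ ≤ |u σ ^ (m + 2) - x ^ (m + 2)| + |a * u σ ^ (2 * m + 3)| := abs_add_le _ _
            _ ≤ ((m + 2 : ℝ) * (2 * x) ^ (m + 1)) * (C1 * x ^ (m + 2))
                + |a| * (2 * x) ^ (2 * m + 3) := add_le_add e1 e2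
            _ = C2 * x ^ (2 * m + 3) := by rw [hC2def, mul_pow, mul_pow]; ring)
      simpa [hu0] using h
    -- step 3
    have hx3 : x ^ (3 * m + 4) ≤ x ^ (2 * m + 4) :=
      pow_le_pow_of_le_one hx0.le hx1 (by omega)
    have hbound3 : ∀ t ∈ Icc (0:ℝ) 1,
        |ρ (u t) - x ^ (m + 2) - (a + ((m:ℝ) + 2) * t) * x ^ (2 * m + 3)|
          ≤ C3 * x ^ (2 * m + 4) := by
      intro t ht
      have hu1 : |u t - x| ≤ C1 * x ^ (m + 2) := hA1 t ht
      have humem : u t ∈ Icc (x - C1 * x ^ (m + 2)) (x + C1 * x ^ (m + 2)) := by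
        rw [abs_le] at hu1
        exact ⟨by linarith [hu1.1], by linarith [hu1.2]⟩
      have hu1' : |u t - x| ≤ C1 * x ^ (m + 2) := hA1 t ht
      have hsub2x : Icc (x - C1 * x ^ (m + 2)) (x + C1 * x ^ (m + 2)) ⊆ Icc 0 (2 * x) := by
        intro y hy
        rw [mem_Icc] at hy
        obtain ⟨hy1, hy2⟩ := hy
        rw [mem_Icc]
        constructor <;> linarith
      have hxmem : x ∈ Icc (x - C1 * x ^ (m + 2)) (x + C1 * x ^ (m + 2)) :=
        ⟨by linarith [hBpos], by linarith [hBpos]⟩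
      -- Term 1
      have hT1 : |u t ^ (m + 2) - x ^ (m + 2) - ((m:ℝ) + 2) * x ^ (m + 1) * (u t - x)|
          ≤ ((m:ℝ) + 2) * ((m:ℝ) + 1) * 2 ^ m * C1 ^ 2 * x ^ (3 * m + 4) := by
        have hmvt := Convex.norm_image_sub_le_of_norm_hasDerivWithin_le
          (f := fun y : ℝ => y ^ (m + 2) - y * (((m:ℝ) + 2) * x ^ (m + 1)))
          (f' := fun y => ((m + 2 : ℕ) : ℝ) * y ^ (m + 1) - ((m:ℝ) + 2) * x ^ (m + 1))
          (s := Icc (x - C1 * x ^ (m + 2)) (x + C1 * x ^ (m + 2)))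
          (C := ((m:ℝ) + 2) * (((m:ℝ) + 1) * (2 * x) ^ m * (C1 * x ^ (m + 2))))
          (fun y _ => (((hasDerivAt_pow (m + 2) y).sub
            (hasDerivAt_mul_const _)).hasDerivWithinAt).congr_deriv (by norm_num))
          (fun y hy => by
            have hy2x : y ∈ Icc 0 (2 * x) := hsub2x hy
            have hyx : |y - x| ≤ C1 * x ^ (m + 2) := by
              rw [abs_le]
              exact ⟨by linarith [hy.1], by linarith [hy.2]⟩
            have hq := pow_mvt (m + 1) hy2x hx2x
            simp only [Nat.add_sub_cancel] at hq
            push_cast at hq ⊢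
            rw [Real.norm_eq_abs, show ((m:ℝ) + 2) * y ^ (m + 1) - ((m:ℝ) + 2) * x ^ (m + 1)
              = ((m:ℝ) + 2) * (y ^ (m + 1) - x ^ (m + 1)) from by ring, abs_mul,
              abs_of_nonneg (by positivity : (0:ℝ) ≤ (m:ℝ) + 2)]
            gcongr
            exact hq.trans (by gcongr))
          (convex_Icc _ _) hxmem humem
        rw [Real.norm_eq_abs, Real.norm_eq_abs] at hmvt
        have heq : u t ^ (m + 2) - x ^ (m + 2) - ((m:ℝ) + 2) * x ^ (m + 1) * (u t - x)
            = (u t ^ (m + 2) - u t * (((m:ℝ) + 2) * x ^ (m + 1)))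
              - (x ^ (m + 2) - x * (((m:ℝ) + 2) * x ^ (m + 1))) := by ring
        rw [heq]
        refine hmvt.trans ?_
        calc ((m:ℝ) + 2) * (((m:ℝ) + 1) * (2 * x) ^ m * (C1 * x ^ (m + 2))) * |u t - x|
            ≤ ((m:ℝ) + 2) * (((m:ℝ) + 1) * (2 * x) ^ m * (C1 * x ^ (m + 2)))
              * (C1 * x ^ (m + 2)) := by gcongr
          _ = ((m:ℝ) + 2) * ((m:ℝ) + 1) * 2 ^ m * C1 ^ 2 * x ^ (3 * m + 4) := by
              rw [mul_pow]; ring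
      -- Term 2
      have hT2 : |((m:ℝ) + 2) * x ^ (m + 1) * (u t - x - t * x ^ (m + 2))|
          ≤ ((m:ℝ) + 2) * C2 * x ^ (3 * m + 4) := by
        have h2 : |u t - x - t * x ^ (m + 2)| ≤ C2 * x ^ (2 * m + 3) := by
          refine (keyB t ht).trans ?_
          nlinarith [mul_pos hC2pos (pow_pos hx0 (2 * m + 3)), ht.1, ht.2]
        rw [abs_mul, abs_of_nonneg (by positivity : (0:ℝ) ≤ ((m:ℝ) + 2) * x ^ (m + 1))]
        calc ((m:ℝ) + 2) * x ^ (m + 1) * |u t - x - t * x ^ (m + 2)|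
            ≤ ((m:ℝ) + 2) * x ^ (m + 1) * (C2 * x ^ (2 * m + 3)) := by gcongr
          _ = ((m:ℝ) + 2) * C2 * x ^ (3 * m + 4) := by ring
      -- Term 3
      have hT3 : |a * (u t ^ (2 * m + 3) - x ^ (2 * m + 3))|
          ≤ |a| * (2 * (m:ℝ) + 3) * 2 ^ (2 * m + 2) * C1 * x ^ (3 * m + 4) := by
        have hq := pow_mvt (2 * m + 3) (hmem2x t ht) hx2x
        simp only [show 2 * m + 3 - 1 = 2 * m + 2 from by omega] at hq
        rw [abs_mul]
        calc |a| * |u t ^ (2 * m + 3) - x ^ (2 * m + 3)|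
            ≤ |a| * (↑(2 * m + 3) * (2 * x) ^ (2 * m + 2) * (C1 * x ^ (m + 2))) := by
              gcongr
              refine hq.trans ?_
              gcongr
          _ = |a| * (2 * (m:ℝ) + 3) * 2 ^ (2 * m + 2) * C1 * x ^ (3 * m + 4) := by
              push_cast
              rw [mul_pow]
              ring
      have hdecomp : ρ (u t) - x ^ (m + 2) - (a + ((m:ℝ) + 2) * t) * x ^ (2 * m + 3)
          = (u t ^ (m + 2) - x ^ (m + 2) - ((m:ℝ) + 2) * x ^ (m + 1) * (u t - x))
            + ((m:ℝ) + 2) * x ^ (m + 1) * (u t - x - t * x ^ (m + 2))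
            + a * (u t ^ (2 * m + 3) - x ^ (2 * m + 3)) := by
        simp only [hρdef]; ring
      rw [hdecomp]
      calc |_ + _ + _| ≤ _ := abs_add_three _ _ _
        _ ≤ ((m:ℝ) + 2) * ((m:ℝ) + 1) * 2 ^ m * C1 ^ 2 * x ^ (3 * m + 4)
            + ((m:ℝ) + 2) * C2 * x ^ (3 * m + 4)
            + |a| * (2 * (m:ℝ) + 3) * 2 ^ (2 * m + 2) * C1 * x ^ (3 * m + 4) :=
              add_le_add (add_le_add hT1 hT2) hT3
        _ = C3 * x ^ (3 * m + 4) := by rw [hC3def]; ring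
        _ ≤ C3 * x ^ (2 * m + 4) := mul_le_mul_of_nonneg_left hx3 hC3pos.le
    -- MVT on w over [0,1]
    have hkeyC := mvt_bound (a := 0) (b := 1)
      (f := fun t => u t - x - t * x ^ (m + 2)
        - (a * t + ((m:ℝ) + 2) / 2 * t ^ 2) * x ^ (2 * m + 3))
      (f' := fun t => ρ (u t) - x ^ (m + 2) - (a + ((m:ℝ) + 2) * t) * x ^ (2 * m + 3))
      zero_le_one
      (fun t ht => by
        have hd := (((hderiv t ht).sub_const x).sub (hasDerivAt_mul_const (x ^ (m + 2)))).sub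
          ((((hasDerivAt_id t).const_mul a).add
            ((hasDerivAt_pow 2 t).const_mul (((m:ℝ) + 2) / 2))).mul_const (x ^ (2 * m + 3)))
        convert hd using 1
        · rfl
        · rfl
        · rfl
        · push_cast
          ring)
      hbound3
    calc |ψ 1 x - (x + x ^ (m + 2) + (a + ((m:ℝ) + 2) / 2) * x ^ (2 * m + 3))|
        = |(u 1 - x - 1 * x ^ (m + 2) - (a * 1 + ((m:ℝ) + 2) / 2 * 1 ^ 2) * x ^ (2 * m + 3))
          - (u 0 - x - 0 * x ^ (m + 2) - (a * 0 + ((m:ℝ) + 2) / 2 * 0 ^ 2) * x ^ (2 * m + 3))| := by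
          rw [hu0]
          norm_num
          ring_nf
          simp only [hudef]
          ring_nf
      _ ≤ C3 * x ^ (2 * m + 4) * (1 - 0) := hkeyC
      _ = C3 * x ^ (2 * m + 4) := by ring
  -- conclude
  rw [Asymptotics.isBigO_iff]
  refine ⟨C3, ?_⟩
  filter_upwards [Ioc_mem_nhdsGT_of_mem
    (show (0:ℝ) ∈ Ico (0:ℝ) δ from ⟨le_refl 0, hδpos⟩)] with x hx
  have h := main x hx
  push_cast at h ⊢
  rw [Real.norm_eq_abs, Real.norm_eq_abs, abs_pow, abs_of_nonneg hx.1.le]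
  exact h
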